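/- On H × R_{>0}, the fundamental 2-form Ω_{a,b} = (1/a²) dx∧dy + (1/b²) ω∧dr (with ω = dt + 2x dy - 2y dx and a = a(r), b = b(r) positive smooth functions) is closed if and only if da/dr = 2a³/b². -/

import Mathlib

/-- Points (x, y, t, r) of H × ℝ_{>0}. -/
abbrev E4 : Type := ℝ × ℝ × ℝ × ℝ

def rc (p : E4) : ℝ := p.2.2.2

/-- ω = dt + 2x dy - 2y dx evaluated at p on u. -/
def omg (p u : E4) : ℝ := u.2.2.1 + 2 * p.1 * u.2.1 - 2 * p.2.1 * u.1

/-- The 2-form Ω_{a,b} = a⁻² dx∧dy + b⁻² ω∧dr. -/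
noncomputable def OmAB (a b : ℝ → ℝ) (p u v : E4) : ℝ :=
  (1 / (a (rc p)) ^ 2) * (u.1 * v.2.1 - u.2.1 * v.1) +
    (1 / (b (rc p)) ^ 2) * (omg p u * v.2.2.2 - omg p v * u.2.2.2)

/-- Exterior derivative of Ω_{a,b} on constant vectors u, v, w. -/
noncomputable def dOmAB (a b : ℝ → ℝ) (p u v w : E4) : ℝ :=
  fderiv ℝ (fun q => OmAB a b q v w) p u -
    fderiv ℝ (fun q => OmAB a b q u w) p v +
    fderiv ℝ (fun q => OmAB a b q u v) p w

noncomputable def Om2 (f g : ℝ → ℝ) (p u v : E4) : ℝ :=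
  f (rc p) * (u.1 * v.2.1 - u.2.1 * v.1) +
    g (rc p) * (omg p u * v.2.2.2 - omg p v * u.2.2.2)

def pr1 : E4 →L[ℝ] ℝ := ContinuousLinearMap.fst ℝ ℝ (ℝ × ℝ × ℝ)
def pr2 : E4 →L[ℝ] ℝ :=
  (ContinuousLinearMap.fst ℝ ℝ (ℝ × ℝ)).comp (ContinuousLinearMap.snd ℝ ℝ (ℝ × ℝ × ℝ))
def pr4 : E4 →L[ℝ] ℝ :=
  (ContinuousLinearMap.snd ℝ ℝ ℝ).comp
    ((ContinuousLinearMap.snd ℝ ℝ (ℝ × ℝ)).comp (ContinuousLinearMap.snd ℝ ℝ (ℝ × ℝ × ℝ)))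

lemma homg (p v : E4) :
    HasFDerivAt (fun q : E4 => omg q v)
      (((2 * v.2.1) • pr1 - (2 * v.1) • pr2) + (0 : E4 →L[ℝ] ℝ)) p := by
  have e : (fun q : E4 => omg q v)
      = fun q : E4 => ((2 * v.2.1) * q.1 - (2 * v.1) * q.2.1) + v.2.2.1 := by
    funext q; simp [omg]; ring
  rw [e]
  have h1 : HasFDerivAt (fun q : E4 => q.1) pr1 p := pr1.hasFDerivAt
  have h2 : HasFDerivAt (fun q : E4 => q.2.1) pr2 p := pr2.hasFDerivAt
  exact ((h1.const_mul (2 * v.2.1)).sub (h2.const_mul (2 * v.1))).add (hasFDerivAt_const _ _)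

lemma fderiv_Om2 (f g : ℝ → ℝ) (f' g' : ℝ) (p v w u : E4)
    (hf : HasDerivAt f f' (rc p)) (hg : HasDerivAt g g' (rc p)) :
    fderiv ℝ (fun q => Om2 f g q v w) p u =
      f' * u.2.2.2 * (v.1 * w.2.1 - v.2.1 * w.1)
      + g' * u.2.2.2 * (omg p v * w.2.2.2 - omg p w * v.2.2.2)
      + g (rc p) * ((2 * u.1 * v.2.1 - 2 * u.2.1 * v.1) * w.2.2.2
          - (2 * u.1 * w.2.1 - 2 * u.2.1 * w.1) * v.2.2.2) := by
  have h4 : HasFDerivAt (fun q : E4 => rc q) pr4 p := pr4.hasFDerivAt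
  have hfq : HasFDerivAt (fun q : E4 => f (rc q)) (f' • pr4) p :=
    hf.comp_hasFDerivAt p h4
  have hgq : HasFDerivAt (fun q : E4 => g (rc q)) (g' • pr4) p :=
    hg.comp_hasFDerivAt p h4
  have hF := (hfq.mul_const (v.1 * w.2.1 - v.2.1 * w.1)).add
    ((hgq.mul (((homg p v).mul_const w.2.2.2).sub ((homg p w).mul_const v.2.2.2))))
  have hF' : HasFDerivAt (fun q => Om2 f g q v w) _ p := hF
  rw [hF'.fderiv]
  simp [pr1, pr2, pr4, omg, rc, Om2]
  ring

lemma dOm_formula (a b : ℝ → ℝ) (f' g' : ℝ) (p u v w : E4)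
    (hf : HasDerivAt (fun s => 1 / (a s) ^ 2) f' (rc p))
    (hg : HasDerivAt (fun s => 1 / (b s) ^ 2) g' (rc p)) :
    dOmAB a b p u v w = (f' + 4 * (1 / (b (rc p)) ^ 2)) *
      (u.2.2.2 * (v.1 * w.2.1 - v.2.1 * w.1) - v.2.2.2 * (u.1 * w.2.1 - u.2.1 * w.1)
        + w.2.2.2 * (u.1 * v.2.1 - u.2.1 * v.1)) := by
  have e : OmAB a b = Om2 (fun s => 1 / (a s) ^ 2) (fun s => 1 / (b s) ^ 2) := rfl
  unfold dOmAB
  rw [e, fderiv_Om2 _ _ _ _ _ _ _ _ hf hg, fderiv_Om2 _ _ _ _ _ _ _ _ hf hg,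
    fderiv_Om2 _ _ _ _ _ _ _ _ hf hg]
  simp only [omg]
  ring

/-- Ω_{a,b} is closed (on H × ℝ_{>0}) if and only if da/dr = 2a³/b². -/
theorem OmAB_closed_iff (a b : ℝ → ℝ)
    (ha : Differentiable ℝ a) (hb : Differentiable ℝ b)
    (hapos : ∀ r : ℝ, 0 < r → 0 < a r) (hbpos : ∀ r : ℝ, 0 < r → 0 < b r) :
    (∀ (p u v w : E4), 0 < rc p → dOmAB a b p u v w = 0) ↔
      (∀ r : ℝ, 0 < r → deriv a r = 2 * (a r) ^ 3 / (b r) ^ 2) := by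
  have hf : ∀ r : ℝ, 0 < r → HasDerivAt (fun s => 1 / (a s) ^ 2)
      (-((2 : ℝ) * a r ^ 1 * deriv a r) / ((a r) ^ 2) ^ 2) r := by
    intro r hr
    have h := (((ha r).hasDerivAt.pow 2).inv (pow_ne_zero 2 (hapos r hr).ne'))
    have e : (fun s => 1 / (a s) ^ 2) = (a ^ 2)⁻¹ := by funext s; simp [one_div]
    rw [e]
    simpa [one_div] using h
  have hg : ∀ r : ℝ, 0 < r → HasDerivAt (fun s => 1 / (b s) ^ 2)
      (-((2 : ℝ) * b r ^ 1 * deriv b r) / ((b r) ^ 2) ^ 2) r := by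
    intro r hr
    have h := (((hb r).hasDerivAt.pow 2).inv (pow_ne_zero 2 (hbpos r hr).ne'))
    have e : (fun s => 1 / (b s) ^ 2) = (b ^ 2)⁻¹ := by funext s; simp [one_div]
    rw [e]
    simpa [one_div] using h
  constructor
  · intro h r hr
    have ha0 : a r ≠ 0 := (hapos r hr).ne'
    have hb0 : b r ≠ 0 := (hbpos r hr).ne'
    have key := h ((0 : ℝ), (0 : ℝ), (0 : ℝ), r) (1, 0, 0, 0) (0, 1, 0, 0) (0, 0, 0, 1) hr
    rw [dOm_formula a b _ _ ((0 : ℝ), (0 : ℝ), (0 : ℝ), r) (1, 0, 0, 0) (0, 1, 0, 0) (0, 0, 0, 1) (hf r hr) (hg r hr)] at key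
    simp only at key
    have key2 : -((2 : ℝ) * a r ^ 1 * deriv a r) / ((a r) ^ 2) ^ 2
        + 4 * (1 / (b r) ^ 2) = 0 := by
      rw [show (rc ((0:ℝ),(0:ℝ),(0:ℝ),r)) = r from rfl] at key
      nlinarith [key]
    field_simp at key2 ⊢
    have h3 : a r * (deriv a r * b r ^ 2 - 2 * a r ^ 3) = 0 := by linear_combination (-(a r)/2 : ℝ) * key2
    rcases mul_eq_zero.1 h3 with h4 | h4
    · exact absurd h4 ha0
    · linarith
  · intro h p u v w hp
    have ha0 : a (rc p) ≠ 0 := (hapos _ hp).ne'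
    have hb0 : b (rc p) ≠ 0 := (hbpos _ hp).ne'
    rw [dOm_formula a b _ _ p u v w (hf _ hp) (hg _ hp)]
    have hz : -((2 : ℝ) * a (rc p) ^ 1 * deriv a (rc p)) / ((a (rc p)) ^ 2) ^ 2
        + 4 * (1 / (b (rc p)) ^ 2) = 0 := by
      rw [h _ hp]
      field_simp
      ring
    rw [hz, zero_mul]
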